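/- Let H be a Hilbert space, (κ_ρ) a one-parameter group of unitaries on H, A a closed operator with domain D_max that is κ-homogeneous of degree m (κ_ρ^{-1} A κ_ρ = ρ^m A). Fix λ in the background resolvent set, K_λ = ker(A − λ) on D_max finite dimensional, and endow D_max with the graph inner product (u,v)_A = (Au,Av)+(u,v). Let π_{K_λ} : D_max → D_max be the graph-orthogonal projection onto K_λ and let p_{K_λ} : H → H be the H-orthogonal projection onto K_λ. Then κ_ρ maps K_λ onto K_{ρ^m λ} and κ_ρ^{-1} π_{K_{ρ^m λ}} κ_ρ = [(1+|λ|²)/(1+|ρ^m λ|²)] ρ^{2m} π_{K_λ} + [(1−ρ^{2m})/(1+|ρ^m λ|²)] p_{K_λ}. -/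

import Mathlib

open scoped ComplexInnerProductSpace

set_option maxHeartbeats 1000000 in
/-- For a κ-homogeneous operator of degree `m`, `κ_ρ` maps `K_λ = ker(A − λ)` onto
`K_{ρ^m λ}`, and the graph-orthogonal projections satisfy
`κ_ρ⁻¹ π_{K_{ρ^m λ}} κ_ρ = (1+|λ|²)/(1+|ρ^m λ|²) ρ^{2m} π_{K_λ}
  + (1−ρ^{2m})/(1+|ρ^m λ|²) p_{K_λ}`. -/
theorem stmt_14 {H : Type*} [NormedAddCommGroup H] [InnerProductSpace ℂ H] [CompleteSpace H]
    (κ : ℝ → (H ≃ₗᵢ[ℂ] H))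
    (hκmul : ∀ ρ σ : ℝ, 0 < ρ → 0 < σ → ∀ x : H, κ (ρ * σ) x = κ ρ (κ σ x))
    (hκone : ∀ x : H, κ 1 x = x)
    (Dmax : Submodule ℂ H) (m : ℕ) (hm : 0 < m)
    (A : ↥Dmax →ₗ[ℂ] H)
    (hκDmax : ∀ ρ : ℝ, 0 < ρ → ∀ x ∈ Dmax, κ ρ x ∈ Dmax)
    (hhom : ∀ (ρ : ℝ), 0 < ρ → ∀ (u : ↥Dmax) (h : κ ρ (u : H) ∈ Dmax),
      A ⟨κ ρ (u : H), h⟩ = ((ρ ^ m : ℝ) : ℂ) • κ ρ (A u))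
    (lam : ℂ) (ρ : ℝ) (hρ : 0 < ρ)
    (hfin : FiniteDimensional ℂ (LinearMap.ker (A - lam • Dmax.subtype)))
    -- P1 = π_{K_λ}: the graph-orthogonal projection of D_max onto K_λ
    (P1 : ↥Dmax →ₗ[ℂ] ↥Dmax)
    (hP1r : ∀ u, P1 u ∈ LinearMap.ker (A - lam • Dmax.subtype))
    (hP1id : ∀ u ∈ LinearMap.ker (A - lam • Dmax.subtype), P1 u = u)
    (hP1orth : ∀ (u : ↥Dmax), ∀ v ∈ LinearMap.ker (A - lam • Dmax.subtype),
      ⟪A v, A (u - P1 u)⟫ + ⟪(v : H), ((u - P1 u : ↥Dmax) : H)⟫ = 0)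
    -- P2 = π_{K_{ρ^m λ}}: the graph-orthogonal projection of D_max onto K_{ρ^m λ}
    (P2 : ↥Dmax →ₗ[ℂ] ↥Dmax)
    (hP2r : ∀ u, P2 u ∈ LinearMap.ker (A - (((ρ ^ m : ℝ) : ℂ) * lam) • Dmax.subtype))
    (hP2id : ∀ u ∈ LinearMap.ker (A - (((ρ ^ m : ℝ) : ℂ) * lam) • Dmax.subtype), P2 u = u)
    (hP2orth : ∀ (u : ↥Dmax), ∀ v ∈ LinearMap.ker (A - (((ρ ^ m : ℝ) : ℂ) * lam) • Dmax.subtype),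
      ⟪A v, A (u - P2 u)⟫ + ⟪(v : H), ((u - P2 u : ↥Dmax) : H)⟫ = 0)
    -- p = p_{K_λ}: the H-orthogonal projection onto K_λ (viewed inside H)
    (p : H →ₗ[ℂ] H)
    (hpr : ∀ w : H, p w ∈ Submodule.map Dmax.subtype (LinearMap.ker (A - lam • Dmax.subtype)))
    (hpid : ∀ w ∈ Submodule.map Dmax.subtype (LinearMap.ker (A - lam • Dmax.subtype)), p w = w)
    (hporth : ∀ (w : H), ∀ v ∈ Submodule.map Dmax.subtype
        (LinearMap.ker (A - lam • Dmax.subtype)), ⟪v, w - p w⟫ = 0) :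
    -- κ_ρ maps K_λ into K_{ρ^m λ} ...
    (∀ u : ↥Dmax, u ∈ LinearMap.ker (A - lam • Dmax.subtype) →
      κ ρ (u : H) ∈ Submodule.map Dmax.subtype
        (LinearMap.ker (A - (((ρ ^ m : ℝ) : ℂ) * lam) • Dmax.subtype))) ∧
    -- ... and the projection identity holds
    (∀ (u : ↥Dmax) (h : κ ρ (u : H) ∈ Dmax),
      (κ ρ).symm ((P2 ⟨κ ρ (u : H), h⟩ : ↥Dmax) : H)
        = (((1 + ‖lam‖ ^ 2) / (1 + (ρ ^ m * ‖lam‖) ^ 2)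
              * (ρ ^ m) ^ 2 : ℝ) : ℂ) • ((P1 u : ↥Dmax) : H)
          + (((1 - (ρ ^ m) ^ 2) / (1 + (ρ ^ m * ‖lam‖) ^ 2) : ℝ) : ℂ)
              • p (u : H)) := by
 -- PROOF START
  have hρinv : (0:ℝ) < ρ⁻¹ := by positivity
  have hκinv' : ∀ x : H, κ ρ (κ ρ⁻¹ x) = x := fun x => by
    rw [← hκmul ρ ρ⁻¹ hρ hρinv, mul_inv_cancel₀ (ne_of_gt hρ), hκone]
  have hker : ∀ (μ : ℂ) (x : ↥Dmax),
      x ∈ LinearMap.ker (A - μ • Dmax.subtype) ↔ A x = μ • (x : H) := by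
    intro μ x
    rw [LinearMap.mem_ker, LinearMap.sub_apply, LinearMap.smul_apply,
      Submodule.subtype_apply, sub_eq_zero]
  have fwd : ∀ (v : ↥Dmax), v ∈ LinearMap.ker (A - lam • Dmax.subtype) →
      ∀ (hv : κ ρ (v : H) ∈ Dmax),
      (⟨κ ρ (v : H), hv⟩ : ↥Dmax) ∈
        LinearMap.ker (A - (((ρ ^ m : ℝ) : ℂ) * lam) • Dmax.subtype) := by
    intro v hvK hv
    rw [hker] at hvK ⊢
    rw [hhom ρ hρ v hv, hvK, map_smul]
    simp [smul_smul]
  have bwd : ∀ (v2 : ↥Dmax),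
      v2 ∈ LinearMap.ker (A - (((ρ ^ m : ℝ) : ℂ) * lam) • Dmax.subtype) →
      ∀ (hv : κ ρ⁻¹ (v2 : H) ∈ Dmax),
      (⟨κ ρ⁻¹ (v2 : H), hv⟩ : ↥Dmax) ∈ LinearMap.ker (A - lam • Dmax.subtype) := by
    intro v2 hK hv
    rw [hker] at hK ⊢
    rw [hhom ρ⁻¹ hρinv v2 hv, hK, map_smul, smul_smul, ← mul_assoc,
      ← Complex.ofReal_mul, inv_pow, inv_mul_cancel₀ (pow_ne_zero m (ne_of_gt hρ))]
    simp
  refine ⟨fun u hu => ⟨⟨κ ρ (u : H), hκDmax ρ hρ _ u.2⟩, fwd u hu _, rfl⟩, ?_⟩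
  intro u h
  obtain ⟨q, hqK, hqe⟩ := hpr (u : H)
  set c1 : ℝ := (1 + ‖lam‖ ^ 2) / (1 + (ρ ^ m * ‖lam‖) ^ 2)
    * (ρ ^ m) ^ 2 with hc1
  set c2 : ℝ := (1 - (ρ ^ m) ^ 2) / (1 + (ρ ^ m * ‖lam‖) ^ 2) with hc2
  set w : ↥Dmax := ((c1 : ℝ) : ℂ) • P1 u + ((c2 : ℝ) : ℂ) • q with hw
  have hwK : w ∈ LinearMap.ker (A - lam • Dmax.subtype) :=
    Submodule.add_mem _ (Submodule.smul_mem _ _ (hP1r u)) (Submodule.smul_mem _ _ hqK)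
  have hwd : κ ρ (w : H) ∈ Dmax := hκDmax ρ hρ _ w.2
  set U : ↥Dmax := ⟨κ ρ (u : H), h⟩ with hU
  set W : ↥Dmax := ⟨κ ρ (w : H), hwd⟩ with hW
  have hWK : W ∈ LinearMap.ker (A - (((ρ ^ m : ℝ) : ℂ) * lam) • Dmax.subtype) :=
    fwd w hwK hwd
  have hden : (0:ℝ) < 1 + (ρ ^ m * ‖lam‖) ^ 2 := by positivity
  have h1 : c1 * (1 + (ρ ^ m * ‖lam‖) ^ 2)
      = (ρ ^ m) ^ 2 * (1 + ‖lam‖ ^ 2) := by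
    rw [hc1]; field_simp
  have h2 : c2 * (1 + (ρ ^ m * ‖lam‖) ^ 2) = 1 - (ρ ^ m) ^ 2 := by
    rw [hc2]; field_simp
  have h1c := congrArg (Complex.ofReal) h1
  have h2c := congrArg (Complex.ofReal) h2
  push_cast at h1c h2c
  have hL : (starRingEnd ℂ) lam * lam = ((‖lam‖ : ℝ) : ℂ) ^ 2 := by
    rw [mul_comm, Complex.mul_conj, Complex.normSq_eq_norm_sq]; push_cast; ring
  have horth : ∀ v2 : ↥Dmax,
      v2 ∈ LinearMap.ker (A - (((ρ ^ m : ℝ) : ℂ) * lam) • Dmax.subtype) →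
      ⟪A v2, A (U - W)⟫ + ⟪(v2 : H), ((U - W : ↥Dmax) : H)⟫ = 0 := by
    intro v2 hv2
    have hvd : κ ρ⁻¹ (v2 : H) ∈ Dmax := hκDmax ρ⁻¹ hρinv _ v2.2
    set v : ↥Dmax := ⟨κ ρ⁻¹ (v2 : H), hvd⟩ with hvdef
    have hvK : v ∈ LinearMap.ker (A - lam • Dmax.subtype) := bwd v2 hv2 hvd
    have hvA : A v = lam • (v : H) := (hker _ _).1 hvK
    have hκv : κ ρ (v : H) = (v2 : H) := hκinv' _
    have hv2' : κ ρ (v : H) ∈ Dmax := by rw [hκv]; exact v2.2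
    have hv2eq : v2 = ⟨κ ρ (v : H), hv2'⟩ := Subtype.ext hκv.symm
    have hAv2 : A v2 = ((ρ ^ m : ℝ) : ℂ) • κ ρ (A v) := by
      rw [hv2eq]; exact hhom ρ hρ v _
    have hAU : A U = ((ρ ^ m : ℝ) : ℂ) • κ ρ (A u) := hhom ρ hρ u h
    have hAW : A W = ((ρ ^ m : ℝ) : ℂ) • κ ρ (A w) := hhom ρ hρ w hwd
    have hUW : ((U - W : ↥Dmax) : H) = κ ρ ((u : H) - (w : H)) := by
      rw [map_sub]; rfl
    have hAP1 : A (P1 u) = lam • ((P1 u : ↥Dmax) : H) := (hker _ _).1 (hP1r u)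
    have hAq : A q = lam • (q : H) := (hker _ _).1 hqK
    have hAw : A w = ((c1 : ℝ) : ℂ) • (lam • ((P1 u : ↥Dmax) : H))
        + ((c2 : ℝ) : ℂ) • (lam • (q : H)) := by
      rw [hw, map_add, map_smul, map_smul, hAP1, hAq]
    have hwH : (w : H) = ((c1 : ℝ) : ℂ) • ((P1 u : ↥Dmax) : H)
        + ((c2 : ℝ) : ℂ) • (q : H) := by
      rw [hw]; push_cast; rfl
    have E1 := hP1orth u v hvK
    have E2 := hporth (u : H) (v : H) ⟨v, hvK, rfl⟩
    rw [map_sub, hAP1, hvA] at E1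
    rw [← hqe] at E2
    rw [map_sub, hAv2, hAU, hAW, ← smul_sub, ← map_sub, hUW, ← hκv,
      inner_smul_left, inner_smul_right, LinearIsometryEquiv.inner_map_map,
      LinearIsometryEquiv.inner_map_map, Complex.conj_ofReal, hAw, hwH, hvA]
    simp only [inner_sub_right, inner_add_right, inner_smul_right, inner_smul_left,
      Complex.conj_ofReal, Submodule.coe_sub, Submodule.subtype_apply] at E1 E2 ⊢
    push_cast at E1 E2 ⊢
    linear_combination (((ρ:ℂ) ^ m) ^ 2) * E1
      + (((ρ:ℂ) ^ m) ^ 2 * (1 - (c1:ℂ)) * ⟪(v : H), ((P1 u : ↥Dmax) : H)⟫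
          - ((ρ:ℂ) ^ m) ^ 2 * (c2:ℂ) * ⟪(v : H), (q : H)⟫) * hL
      - ⟪(v : H), ((P1 u : ↥Dmax) : H)⟫ * h1c
      - ⟪(v : H), (q : H)⟫ * h2c
      + (1 - ((ρ:ℂ) ^ m) ^ 2) * E2
  have hPU : P2 U = W := by
    have hdK : P2 U - W ∈
        LinearMap.ker (A - (((ρ ^ m : ℝ) : ℂ) * lam) • Dmax.subtype) :=
      Submodule.sub_mem _ (hP2r U) hWK
    have h₁ := hP2orth U (P2 U - W) hdK
    have h₂ := horth (P2 U - W) hdK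
    have key : ⟪A (P2 U - W), A (P2 U - W)⟫
        + ⟪((P2 U - W : ↥Dmax) : H), ((P2 U - W : ↥Dmax) : H)⟫ = 0 := by
      have e1 : A (U - W) - A (U - P2 U) = A (P2 U - W) := by
        rw [← map_sub]; congr 1; abel
      have e2 : ((U - W : ↥Dmax) : H) - ((U - P2 U : ↥Dmax) : H)
          = ((P2 U - W : ↥Dmax) : H) := by
        push_cast; abel
      have h3 : ⟪A (P2 U - W), A (U - W) - A (U - P2 U)⟫
          + ⟪((P2 U - W : ↥Dmax) : H), ((U - W : ↥Dmax) : H) - ((U - P2 U : ↥Dmax) : H)⟫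
          = 0 := by
        rw [inner_sub_right, inner_sub_right]
        linear_combination h₂ - h₁
      rw [e1, e2] at h3
      exact h3
    rw [inner_self_eq_norm_sq_to_K, inner_self_eq_norm_sq_to_K] at key
    norm_cast at key
    rw [RCLike.ofReal_eq_zero] at key
    have hn : ‖P2 U - W‖ = 0 := by
      nlinarith [sq_nonneg ‖A (P2 U - W)‖, norm_nonneg (P2 U - W)]
    have h0' : P2 U - W = 0 := norm_eq_zero.mp hn
    exact sub_eq_zero.mp h0'
  rw [hPU]
  show (κ ρ).symm (κ ρ (w : H)) = _
  rw [LinearIsometryEquiv.symm_apply_apply, hw]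
  push_cast
  rw [← hqe]
  rfl
 -- PROOF END
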